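/- Let f : 𝕋 → ℂ be a W^{1,2} function on the unit circle with Fourier coefficients (c_n)_{n∈ℤ}, so f(e^{iθ}) = Σ c_n e^{inθ}. If max_{𝕋} |f - c₀| ≥ 2 · min_{𝕋} |f - c₀|, then Σ_{n∈ℤ} n·|c_n|² ≤ (99/100) · Σ_{n∈ℤ} n²·|c_n|². -/

import Mathlib

open Complex MeasureTheory Filter
open scoped Real Topology

private lemma exp_norm_one (n : ℤ) (θ : ℝ) : ‖Complex.exp (Complex.I * n * θ)‖ = 1 := by
  rw [Complex.norm_exp]
  simp [Complex.mul_re]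

private lemma amgm {x y l : ℝ} (hl : 0 < l) : x * y ≤ (l * x^2 + y^2 / l)/2 := by
  rw [le_div_iff₀ (by norm_num : (0:ℝ) < 2), ← sub_nonneg]
  have h : l * x^2 + y^2 / l - x * y * 2 = (l*x - y)^2/l := by field_simp; ring
  rw [h]; positivity

private lemma zeta_bound : ∑' n : ℤ, 1 / (n:ℝ)^2 ≤ 331/100 := by
  have hnat : Summable fun n : ℕ => 1 / (n:ℝ)^2 := Real.summable_one_div_nat_pow.mpr one_lt_two
  have h1 : Summable fun n : ℕ => 1 / (((n:ℤ)):ℝ)^2 := by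
    apply hnat.congr; intro n; norm_num
  have h2 : Summable fun n : ℕ => 1 / (((-((n:ℤ)+1)):ℤ):ℝ)^2 := by
    apply (hnat.comp_injective (add_left_injective 1)).congr
    intro n; push_cast; simp [Function.comp]; ring_nf
  have hsplit := tsum_of_nat_of_neg_add_one (f := fun n : ℤ => 1 / (n:ℝ)^2) h1 h2
  have hz := hasSum_zeta_two.tsum_eq
  have hzshift : ∑' n : ℕ, 1 / ((n:ℝ)+1)^2 = Real.pi^2/6 := by
    have h := Summable.tsum_eq_zero_add hnat
    norm_num at h
    simp only [one_div] at hz ⊢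
    rw [← hz, h]
  have e1 : ∑' n : ℕ, 1 / (((n:ℤ)):ℝ)^2 = Real.pi^2/6 := by rw [← hz]; norm_num
  have e2 : ∑' n : ℕ, 1 / (((-((n:ℤ)+1)):ℤ):ℝ)^2 = Real.pi^2/6 := by
    rw [← hzshift]; apply tsum_congr; intro n; push_cast; ring_nf
  rw [hsplit, e1, e2]
  have hpi := Real.pi_lt_d2
  have hpi0 := Real.pi_gt_three
  nlinarith

theorem stmt6 (c : ℤ → ℂ) (f : ℝ → ℂ) (hcont : Continuous f)
    (hW12 : Summable fun n : ℤ => (n : ℝ) ^ 2 * ‖c n‖ ^ 2)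
    (hrep : ∀ θ : ℝ, f θ = ∑' n : ℤ, c n * Complex.exp (Complex.I * n * θ))
    (hgap : 2 * (⨅ θ : ℝ, ‖f θ - c 0‖) ≤ ⨆ θ : ℝ, ‖f θ - c 0‖) :
    ∑' n : ℤ, (n : ℝ) * ‖c n‖ ^ 2 ≤ (99 / 100) * ∑' n : ℤ, (n : ℝ) ^ 2 * ‖c n‖ ^ 2 := by
  by_contra hcon
  push_neg at hcon
  set A := ∑' n : ℤ, (n : ℝ) * ‖c n‖ ^ 2 with hA_def
  set B := ∑' n : ℤ, (n : ℝ) ^ 2 * ‖c n‖ ^ 2 with hB_def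
  -- basic cast fact
  have habs : ∀ n : ℤ, |(n:ℝ)| ≤ (n:ℝ)^2 := by
    intro n
    rcases eq_or_ne n 0 with h | h
    · simp [h]
    · have h1 : (1:ℝ) ≤ |(n:ℝ)| := by
        rw [← Int.cast_abs]
        exact_mod_cast Int.one_le_abs (by simpa using h)
      nlinarith [_root_.sq_abs ((n:ℝ))]
  -- summability of A's terms
  have hA_sum : Summable fun n : ℤ => (n : ℝ) * ‖c n‖ ^ 2 := by
    apply Summable.of_norm_bounded hW12
    intro n
    rw [norm_mul, Real.norm_eq_abs, Real.norm_eq_abs, _root_.abs_of_nonneg (by positivity : (0:ℝ) ≤ ‖c n‖^2)]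
    exact mul_le_mul_of_nonneg_right (habs n) (by positivity)
  have hAB : A ≤ B := by
    apply Summable.tsum_le_tsum _ hA_sum hW12
    intro n
    have := habs n
    have := le_abs_self ((n:ℝ))
    nlinarith [sq_nonneg ‖c n‖]
  have hBpos : 0 < B := by linarith
  set s := Real.sqrt B with hs_def
  have hspos : 0 < s := Real.sqrt_pos.mpr hBpos
  have hs2 : s^2 = B := Real.sq_sqrt hBpos.le
  -- auxiliary series
  set u : ℤ → ℝ := fun n => 1 / (n:ℝ)^2 with hu_def
  set v : ℤ → ℝ := fun n => if n = 0 ∨ n = 1 then 0 else (n:ℝ)^2 * ‖c n‖^2 with hv_def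
  set e : ℤ → ℝ := fun n => if n = 0 ∨ n = 1 then 0 else ‖c n‖ with he_def
  have hu : Summable u := Real.summable_one_div_int_pow.mpr one_lt_two
  have hv : Summable v := by
    apply Summable.of_nonneg_of_le _ _ hW12
    · intro n; simp only [hv_def]; split <;> positivity
    · intro n; simp only [hv_def]; split
      · positivity
      · exact le_refl _
  -- T := sum of v, bounded by 2(B-A)
  have hBA_sum : Summable fun n : ℤ => 2*((n:ℝ)^2*‖c n‖^2 - (n:ℝ)*‖c n‖^2) :=
    (hW12.sub hA_sum).mul_left 2
  have hT : ∑' n, v n ≤ 2*(B - A) := by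
    have hle : ∀ n : ℤ, v n ≤ 2*((n:ℝ)^2*‖c n‖^2 - (n:ℝ)*‖c n‖^2) := by
      intro n
      simp only [hv_def]
      split
      · rcases ‹n = 0 ∨ n = 1› with h | h <;> simp [h]
      · rename_i h
        push_neg at h
        have h2 : n ≤ -1 ∨ 2 ≤ n := by omega
        rcases h2 with h2 | h2
        · have hn : (n:ℝ) ≤ -1 := by exact_mod_cast h2
          nlinarith [mul_nonneg (mul_nonneg (by linarith : (0:ℝ) ≤ -(n:ℝ)) (by linarith : (0:ℝ) ≤ 2-(n:ℝ))) (sq_nonneg ‖c n‖)]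
        · have hn : (2:ℝ) ≤ (n:ℝ) := by exact_mod_cast h2
          nlinarith [mul_nonneg (mul_nonneg (by linarith : (0:ℝ) ≤ (n:ℝ)-2) (by linarith : (0:ℝ) ≤ (n:ℝ))) (sq_nonneg ‖c n‖)]
    calc ∑' n, v n ≤ ∑' n : ℤ, 2*((n:ℝ)^2*‖c n‖^2 - (n:ℝ)*‖c n‖^2) :=
          Summable.tsum_le_tsum hle hv hBA_sum
      _ = 2*(B - A) := by rw [tsum_mul_left, Summable.tsum_sub hW12 hA_sum]
  -- lower bound on ‖c 1‖
  have hc1sq : 98/100 * B ≤ ‖c 1‖^2 := by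
    have h := Summable.tsum_eq_add_tsum_ite hW12 1
    have h2 : ∑' n : ℤ, (if n = 1 then 0 else (n:ℝ)^2*‖c n‖^2) = ∑' n, v n := by
      apply tsum_congr
      intro n
      simp only [hv_def]
      by_cases h0 : n = 0
      · simp [h0]
      · by_cases h1 : n = 1 <;> simp [h0, h1]
    rw [h2] at h
    have : B = ‖c 1‖^2 + ∑' n, v n := by
      rw [hB_def, h]; push_cast; ring
    nlinarith
  have hc1 : 9/10 * s ≤ ‖c 1‖ := by
    nlinarith [norm_nonneg (c 1), hs2, hspos]
  -- the epsilon bound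
  set l : ℝ := s / 10 with hl_def
  have hlpos : 0 < l := by positivity
  have hb_sum : Summable fun n : ℤ => (l * u n + v n / l)/2 :=
    ((hu.mul_left l).add (hv.div_const l)).div_const 2
  have he_le : ∀ n : ℤ, e n ≤ (l * u n + v n / l)/2 := by
    intro n
    simp only [he_def, hv_def, hu_def]
    split
    · rename_i h
      have hun : (0:ℝ) ≤ 1/(n:ℝ)^2 := by positivity
      positivity
    · rename_i h
      push_neg at h
      have hn0 : ((n:ℝ)) ≠ 0 := by exact_mod_cast h.1
      have key := amgm (x := 1/|(n:ℝ)|) (y := |(n:ℝ)| * ‖c n‖) hlpos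
      have habsne : |(n:ℝ)| ≠ 0 := abs_ne_zero.mpr hn0
      have e1 : 1/|(n:ℝ)| * (|(n:ℝ)| * ‖c n‖) = ‖c n‖ := by
        field_simp
      have e2 : (1/|(n:ℝ)|)^2 = 1/(n:ℝ)^2 := by
        rw [div_pow, one_pow, _root_.sq_abs]
      have e3 : (|(n:ℝ)| * ‖c n‖)^2 = (n:ℝ)^2 * ‖c n‖^2 := by
        rw [mul_pow, _root_.sq_abs]
      rw [e1, e2, e3] at key
      exact key
  have he_sum : Summable e := by
    apply Summable.of_nonneg_of_le _ he_le hb_sum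
    intro n; simp only [he_def]; split
    · exact le_refl _
    · exact norm_nonneg _
  set E := ∑' n, e n with hE_def
  have hEbound : E ≤ 27/100 * s := by
    have h1 : E ≤ ∑' n : ℤ, (l * u n + v n / l)/2 := Summable.tsum_le_tsum he_le he_sum hb_sum
    have h2 : ∑' n : ℤ, (l * u n + v n / l)/2 = (l * (∑' n, u n) + (∑' n, v n)/l)/2 := by
      rw [tsum_div_const, Summable.tsum_add (hu.mul_left l) (hv.div_const l), tsum_mul_left, tsum_div_const]
    have hK := zeta_bound
    have hvnonneg : (0:ℝ) ≤ ∑' n, v n := by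
      apply tsum_nonneg; intro n; simp only [hv_def]; split <;> positivity
    have hTB : ∑' n, v n ≤ 2/100 * B := by nlinarith
    have h3 : (∑' n, v n)/l ≤ (2/100 * B)/l := by
      gcongr
    have h4 : (2/100 * B)/l = 2/10 * s := by
      rw [hl_def, ← hs2]; field_simp; ring
    have h5 : l * (∑' n, u n) ≤ l * (331/100) := by
      apply mul_le_mul_of_nonneg_left hK hlpos.le
    rw [h2] at h1
    rw [h4] at h3
    calc E ≤ (l * (∑' n, u n) + (∑' n, v n)/l)/2 := h1
      _ ≤ (l * (331/100) + 2/10*s)/2 := by linarith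
      _ ≤ 27/100 * s := by rw [hl_def]; ring_nf; linarith
  -- summability of norms and of the series pointwise
  have hnorm_sum : Summable fun n : ℤ => ‖c n‖ := by
    have h2 : Summable (fun n : ℤ => if n = 0 ∨ n = 1 then ‖c n‖ else 0) := by
      apply summable_of_ne_finset_zero (s := ({0, 1} : Finset ℤ))
      intro b hb
      simp only [Finset.mem_insert, Finset.mem_singleton] at hb
      push_neg at hb
      simp [hb.1, hb.2]
    apply (he_sum.add h2).congr
    intro n
    simp only [he_def]
    split <;> simp
  have hterm_norm : ∀ (θ : ℝ) (n : ℤ), ‖c n * Complex.exp (Complex.I * n * θ)‖ = ‖c n‖ := by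
    intro θ n; rw [norm_mul, exp_norm_one, mul_one]
  have hsexp : ∀ θ : ℝ, Summable fun n : ℤ => c n * Complex.exp (Complex.I * n * θ) := by
    intro θ
    apply Summable.of_norm
    exact hnorm_sum.congr fun n => (hterm_norm θ n).symm
  have hexpθ : ∀ θ : ℝ, ‖Complex.exp (Complex.I * θ)‖ = 1 := by
    intro θ
    rw [Complex.norm_exp]
    simp [Complex.mul_re]
  -- pointwise bounds on ‖f θ - c 0‖
  have key : ∀ θ : ℝ, ‖c 1‖ - E ≤ ‖f θ - c 0‖ ∧ ‖f θ - c 0‖ ≤ ‖c 1‖ + E := by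
    intro θ
    set a : ℤ → ℂ := fun n => c n * Complex.exp (Complex.I * n * θ) with ha_def
    have hsa := hsexp θ
    have hia : Summable (fun n : ℤ => if n = 0 then 0 else a n) := by
      apply Summable.of_norm_bounded hnorm_sum
      intro n
      split
      · simp
      · rw [hterm_norm θ n]
    have h0 := Summable.tsum_eq_add_tsum_ite hsa 0
    have h1 := Summable.tsum_eq_add_tsum_ite hia 1
    set R : ℂ := ∑' n : ℤ, (if n = 0 ∨ n = 1 then 0 else a n) with hR_def
    have hdouble : ∑' n : ℤ, (if n = 1 then 0 else if n = 0 then 0 else a n) = R := by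
      apply tsum_congr
      intro n
      by_cases h0' : n = 0
      · simp [h0']
      · by_cases h1' : n = 1 <;> simp [h0', h1']
    have ha0 : a 0 = c 0 := by simp [ha_def]
    have ha1 : (if (1:ℤ) = 0 then (0:ℂ) else a 1) = c 1 * Complex.exp (Complex.I * θ) := by
      norm_num [ha_def]
    have hfθ : f θ - c 0 = c 1 * Complex.exp (Complex.I * θ) + R := by
      rw [hrep θ, h0, h1, hdouble]
      push_cast
      norm_num
      simp only [ha_def, Int.cast_one, mul_one]
    have hnormite : ∀ n : ℤ, ‖(if n = 0 ∨ n = 1 then (0:ℂ) else a n)‖ = e n := by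
      intro n
      simp only [he_def]
      split
      · simp
      · rw [hterm_norm θ n]
    have hnormR : ‖R‖ ≤ E := by
      have hh := norm_tsum_le_tsum_norm (f := fun n : ℤ => if n = 0 ∨ n = 1 then (0:ℂ) else a n)
        (he_sum.congr fun n => (hnormite n).symm)
      rw [tsum_congr hnormite] at hh
      exact hh
    have hnc1 : ‖c 1 * Complex.exp (Complex.I * θ)‖ = ‖c 1‖ := by
      rw [norm_mul, hexpθ θ, mul_one]
    constructor
    · rw [hfθ]
      have := norm_sub_norm_le (c 1 * Complex.exp (Complex.I * θ)) (-R)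
      rw [sub_neg_eq_add, norm_neg, hnc1] at this
      linarith
    · rw [hfθ]
      calc ‖c 1 * Complex.exp (Complex.I * θ) + R‖ ≤ ‖c 1 * Complex.exp (Complex.I * θ)‖ + ‖R‖ :=
            norm_add_le _ _
        _ ≤ ‖c 1‖ + E := by rw [hnc1]; linarith
  have hlow : (‖c 1‖ - E) ≤ ⨅ θ : ℝ, ‖f θ - c 0‖ := le_ciInf fun θ => (key θ).1
  have hhigh : (⨆ θ : ℝ, ‖f θ - c 0‖) ≤ ‖c 1‖ + E := ciSup_le fun θ => (key θ).2
  have : 2 * (‖c 1‖ - E) ≤ ‖c 1‖ + E := by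
    calc 2 * (‖c 1‖ - E) ≤ 2 * ⨅ θ : ℝ, ‖f θ - c 0‖ := by linarith
      _ ≤ ⨆ θ : ℝ, ‖f θ - c 0‖ := hgap
      _ ≤ ‖c 1‖ + E := hhigh
  linarith
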